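/- Let c ∈ ℂ with c = a/q + γ, where a, q ∈ ℤ[i] are coprime, q ≠ 0, |γ| ≤ |q|⁻². Then for all z ≥ 1 and all 0 < Δ₁, Δ₂ ≤ 1/2, the number of Gaussian integers n with 0 < |n|² ≤ z, ‖Im(nc)‖ ≤ Δ₁ and ‖Re(nc)‖ ≤ Δ₂ is at most a constant times (1 + z/|q|²)·(1 + Δ₁|q|)·(1 + Δ₂|q|), where ‖x‖ denotes the distance from the real x to the nearest integer. -/

import Mathlib

open Complex GaussianInt

/-- Distance from a real number to the nearest integer. -/
noncomputable def nint (x : ℝ) : ℝ := ⨅ n : ℤ, |x - (n : ℝ)|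

lemma nint_le (x : ℝ) (n : ℤ) : nint x ≤ |x - n| :=
  ciInf_le ⟨0, by rintro y ⟨k, rfl⟩; positivity⟩ n

lemma nint_eq (x : ℝ) : nint x = |x - round x| := by
  refine le_antisymm (nint_le x _) (le_ciInf fun n => ?_)
  rw [abs_sub_round_eq_min]
  rcases le_or_gt n ⌊x⌋ with h | h
  · calc min (Int.fract x) (1 - Int.fract x) ≤ Int.fract x := min_le_left _ _
      _ ≤ x - n := by
          have := Int.floor_le x
          have : (n:ℝ) ≤ ⌊x⌋ := by exact_mod_cast h
          unfold Int.fract; linarith [Int.floor_le x]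
      _ ≤ |x - n| := le_abs_self _
  · have hn : (⌊x⌋:ℝ) + 1 ≤ n := by exact_mod_cast h
    calc min (Int.fract x) (1 - Int.fract x) ≤ 1 - Int.fract x := min_le_right _ _
      _ ≤ n - x := by unfold Int.fract; linarith
      _ ≤ |x - n| := by rw [abs_sub_comm]; exact le_abs_self _

lemma one_le_abs_toComplex {w : GaussianInt} (h : w ≠ 0) : 1 ≤ ‖(w : ℂ)‖ := by
  have h1 : 1 ≤ (Zsqrtd.norm w : ℝ) := by exact_mod_cast GaussianInt.norm_pos.mpr h
  rw [intCast_real_norm] at h1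
  rw [← Complex.sq_norm] at h1
  nlinarith [norm_nonneg (w:ℂ)]

lemma spacing (c γ : ℂ) (a q : GaussianInt) (hq : q ≠ 0) (hco : IsCoprime a q)
    (hc : c = (a : ℂ) / (q : ℂ) + γ) (hγ : ‖γ‖ ≤ (‖(q : ℂ)‖)⁻¹ ^ 2)
    (m : GaussianInt) (hm0 : m ≠ 0) (hm : 3 * ‖(m : ℂ)‖ ≤ ‖(q : ℂ)‖) :
    1 / (3 * ‖(q : ℂ)‖) ≤ max (nint ((m : ℂ) * c).re) (nint ((m : ℂ) * c).im) := by
  set Q := ‖(q : ℂ)‖ with hQ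
  have hQ1 : 1 ≤ Q := one_le_abs_toComplex hq
  have hq0 : (q : ℂ) ≠ 0 := by simpa [toComplex_eq_zero] using hq
  set k : GaussianInt := ⟨round ((m : ℂ) * c).re, round ((m : ℂ) * c).im⟩ with hk
  -- the numerator is nonzero
  have hw : m * a - q * k ≠ 0 := by
    intro h0
    have hdvd : q ∣ m * a := ⟨k, by linear_combination h0⟩
    have hqm : q ∣ m := (hco.symm).dvd_of_dvd_mul_right hdvd
    obtain ⟨t, rfl⟩ := hqm
    have ht : t ≠ 0 := by rintro rfl; simp at hm0
    have h1t : 1 ≤ ‖(t : ℂ)‖ := one_le_abs_toComplex ht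
    have : ‖((q * t : GaussianInt) : ℂ)‖ = Q * ‖(t : ℂ)‖ := by
      rw [toComplex_mul, norm_mul]
    nlinarith [hm]
  have hw1 : 1 ≤ ‖((m * a - q * k : GaussianInt) : ℂ)‖ := one_le_abs_toComplex hw
  -- lower bound on |mc - k|
  have key : 2 / (3 * Q) ≤ ‖((m : ℂ) * c - (k : ℂ))‖ := by
    have hsplit : (m : ℂ) * c - (k : ℂ) =
        ((m * a - q * k : GaussianInt) : ℂ) / (q : ℂ) + (m : ℂ) * γ := by
      push_cast [toComplex_mul, toComplex_sub]
      rw [hc, sub_div, mul_div_assoc, mul_div_cancel_left₀ _ hq0]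
      ring
    have h1 : 1 / Q ≤ ‖(((m * a - q * k : GaussianInt) : ℂ) / (q : ℂ))‖ := by
      rw [norm_div]
      rw [div_le_div_iff₀ (by linarith) (by linarith)]
      nlinarith
    have h2 : ‖((m : ℂ) * γ)‖ ≤ 1 / (3 * Q) := by
      rw [norm_mul]
      have hmle : ‖(m : ℂ)‖ ≤ Q / 3 := by linarith
      have h0m : 0 ≤ ‖(m : ℂ)‖ := norm_nonneg _
      have h0γ : 0 ≤ ‖γ‖ := norm_nonneg _
      have hγ' : ‖γ‖ ≤ 1 / Q ^ 2 := by rw [inv_pow] at hγ; rw [← one_div] at hγ; exact hγ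
      calc ‖(m : ℂ)‖ * ‖γ‖ ≤ (Q / 3) * (1 / Q ^ 2) := by
            apply mul_le_mul hmle hγ' h0γ (by linarith)
        _ = 1 / (3 * Q) := by field_simp
    calc (2 : ℝ) / (3 * Q) = 1 / Q - 1 / (3 * Q) := by field_simp; ring
      _ ≤ ‖(((m * a - q * k : GaussianInt) : ℂ) / (q : ℂ))‖ - ‖((m:ℂ) * γ)‖ := by
          linarith
      _ ≤ ‖((m : ℂ) * c - (k : ℂ))‖ := by
          rw [hsplit]
          have h := norm_add_le
            ((((m * a - q * k : GaussianInt) : ℂ) / (q : ℂ)) + (m : ℂ) * γ) (-((m : ℂ) * γ))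
          simp only [add_neg_cancel_right, norm_neg] at h
          linarith
  -- |mc - k| ≤ nint re + nint im ≤ 2 max
  have hre : |((m : ℂ) * c - (k : ℂ)).re| = nint ((m : ℂ) * c).re := by
    rw [nint_eq]
    simp [hk, Complex.sub_re, re_toComplex]
  have him : |((m : ℂ) * c - (k : ℂ)).im| = nint ((m : ℂ) * c).im := by
    rw [nint_eq]
    simp [hk, Complex.sub_im, im_toComplex]
  have habs := Complex.norm_le_abs_re_add_abs_im ((m : ℂ) * c - (k : ℂ))
  rw [hre, him] at habs
  have h1 := le_max_left (nint ((m : ℂ) * c).re) (nint ((m : ℂ) * c).im)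
  have h2 := le_max_right (nint ((m : ℂ) * c).re) (nint ((m : ℂ) * c).im)
  have h3 : 2 / (3 * Q) = 2 * (1 / (3 * Q)) := by ring
  rw [h3] at key
  rcases max_cases (nint ((m : ℂ) * c).re) (nint ((m : ℂ) * c).im) with ⟨he, _⟩ | ⟨he, _⟩ <;>
    rw [he] <;> linarith

lemma card_Icc_le (a b : ℤ) (B : ℝ) (h1 : (b : ℝ) - a + 1 ≤ B) (h0 : 0 ≤ B) :
    ((Finset.Icc a b).card : ℝ) ≤ B := by
  rw [Int.card_Icc]
  rcases le_or_gt (b + 1 - a) 0 with h | h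
  · rw [Int.toNat_of_nonpos h]; simpa
  · have hcast : (((b + 1 - a).toNat : ℕ) : ℝ) = (b : ℝ) + 1 - a := by
      rw [← Int.cast_natCast, Int.toNat_of_nonneg h.le]; push_cast; ring
    rw [hcast]; linarith


set_option maxHeartbeats 1000000 in
/-- Counting Gaussian integers `n` with `0 < |n|² ≤ z` for which both `‖Im(nc)‖ ≤ Δ₁` and
`‖Re(nc)‖ ≤ Δ₂`, when `c = a/q + γ` is well approximated by the Gaussian rational `a/q`:
the count is `O((1 + z/|q|²)(1 + Δ₁|q|)(1 + Δ₂|q|))`. -/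
theorem gaussian_counting_bound :
    ∃ C : ℝ, 0 < C ∧ ∀ c γ : ℂ, ∀ a q : GaussianInt, q ≠ 0 → IsCoprime a q →
      c = (a : ℂ) / (q : ℂ) + γ → ‖γ‖ ≤ (‖(q : ℂ)‖)⁻¹ ^ 2 →
      ∀ z Δ₁ Δ₂ : ℝ, 1 ≤ z → 0 < Δ₁ → Δ₁ ≤ 1 / 2 → 0 < Δ₂ → Δ₂ ≤ 1 / 2 →
      ({n : GaussianInt | 0 < ‖(n : ℂ)‖ ^ 2 ∧ ‖(n : ℂ)‖ ^ 2 ≤ z ∧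
          nint (((n : ℂ) * c).im) ≤ Δ₁ ∧ nint (((n : ℂ) * c).re) ≤ Δ₂}.ncard : ℝ) ≤
        C * (1 + z / ‖(q : ℂ)‖ ^ 2) * (1 + Δ₁ * ‖(q : ℂ)‖) *
          (1 + Δ₂ * ‖(q : ℂ)‖) := by
  refine ⟨10368, by norm_num, ?_⟩
  intro c γ a q hq hco hc hγ z Δ₁ Δ₂ hz hΔ₁ hΔ₁' hΔ₂ hΔ₂'
  set Q := ‖(q : ℂ)‖ with hQdef
  have hQ1 : 1 ≤ Q := one_le_abs_toComplex hq
  have hQ0 : 0 < Q := by linarith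
  set t : ℝ := Q / 6 with ht
  have ht0 : 0 < t := by rw [ht]; linarith
  set δ : ℝ := 1 / (3 * Q) with hδ
  have hδ0 : 0 < δ := by rw [hδ]; positivity
  have hz0 : 0 < z := by linarith
  have hsz0 : 0 ≤ Real.sqrt z := Real.sqrt_nonneg z
  set S : Set GaussianInt := {n : GaussianInt | 0 < ‖(n : ℂ)‖ ^ 2 ∧
      ‖(n : ℂ)‖ ^ 2 ≤ z ∧ nint (((n : ℂ) * c).im) ≤ Δ₁ ∧
      nint (((n : ℂ) * c).re) ≤ Δ₂} with hS
  set f : GaussianInt → ℤ × ℤ × ℤ × ℤ := fun n =>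
    (⌊(n.re : ℝ) / t⌋, ⌊(n.im : ℝ) / t⌋,
     ⌊((((n : ℂ) * c).re - round (((n : ℂ) * c).re)) + Δ₂) / δ⌋,
     ⌊((((n : ℂ) * c).im - round (((n : ℂ) * c).im)) + Δ₁) / δ⌋) with hf
  set J : Finset ℤ := Finset.Icc ⌊(-Real.sqrt z) / t⌋ ⌊Real.sqrt z / t⌋ with hJ
  set B₂ : Finset ℤ := Finset.Icc 0 ⌊2 * Δ₂ / δ⌋ with hB₂
  set B₁ : Finset ℤ := Finset.Icc 0 ⌊2 * Δ₁ / δ⌋ with hB₁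
  set T : Finset (ℤ × ℤ × ℤ × ℤ) := J ×ˢ J ×ˢ B₂ ×ˢ B₁ with hT
  -- membership
  have hmem : ∀ n ∈ S, f n ∈ (T : Set (ℤ × ℤ × ℤ × ℤ)) := by
    intro n hn
    obtain ⟨-, hn2, hn3, hn4⟩ := hn
    have habs : ‖(n : ℂ)‖ ≤ Real.sqrt z := by
      rw [← Real.sqrt_sq (norm_nonneg _)]
      exact Real.sqrt_le_sqrt hn2
    have hre : |(n.re : ℝ)| ≤ Real.sqrt z := by
      rw [GaussianInt.intCast_re]; exact (Complex.abs_re_le_norm _).trans habs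
    have him : |(n.im : ℝ)| ≤ Real.sqrt z := by
      rw [GaussianInt.intCast_im]; exact (Complex.abs_im_le_norm _).trans habs
    have hj : ∀ x : ℝ, |x| ≤ Real.sqrt z → ⌊x / t⌋ ∈ J := by
      intro x hx
      rw [hJ, Finset.mem_Icc]
      rw [abs_le] at hx
      exact ⟨Int.floor_le_floor ((div_le_div_iff_of_pos_right ht0).mpr hx.1),
        Int.floor_le_floor ((div_le_div_iff_of_pos_right ht0).mpr hx.2)⟩
    have hb : ∀ (x Δ : ℝ), 0 < Δ → nint x ≤ Δ →
        ⌊((x - round x) + Δ) / δ⌋ ∈ Finset.Icc (0 : ℤ) ⌊2 * Δ / δ⌋ := by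
      intro x Δ hΔ hx
      rw [nint_eq, abs_le] at hx
      rw [Finset.mem_Icc]
      refine ⟨Int.floor_nonneg.mpr (div_nonneg (by linarith [hx.1]) hδ0.le), ?_⟩
      exact Int.floor_le_floor ((div_le_div_iff_of_pos_right hδ0).mpr (by linarith [hx.2]))
    simp only [hT, hB₂, hB₁, Finset.mem_coe, Finset.mem_product]
    exact ⟨hj _ hre, hj _ him, hb _ _ hΔ₂ hn4, hb _ _ hΔ₁ hn3⟩
  -- injectivity
  have hinj : Set.InjOn f S := by
    intro n₁ h₁ n₂ h₂ hfe
    by_contra hne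
    set m : GaussianInt := n₁ - n₂ with hm
    have hm0 : m ≠ 0 := sub_ne_zero.mpr hne
    simp only [hf, Prod.mk.injEq] at hfe
    obtain ⟨he1, he2, he3, he4⟩ := hfe
    have hdiff : ∀ x y : ℝ, ⌊x / t⌋ = ⌊y / t⌋ → |x - y| < t := by
      intro x y h
      have h1 := Int.abs_sub_lt_one_of_floor_eq_floor h
      rw [div_sub_div_same, abs_div, abs_of_pos ht0, div_lt_one ht0] at h1
      exact h1
    have hdre : |((n₁.re : ℝ)) - (n₂.re : ℝ)| < t := hdiff _ _ he1
    have hdim : |((n₁.im : ℝ)) - (n₂.im : ℝ)| < t := hdiff _ _ he2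
    have hmre : ((m : ℂ)).re = (n₁.re : ℝ) - (n₂.re : ℝ) := by
      rw [hm, toComplex_sub, Complex.sub_re, GaussianInt.intCast_re, GaussianInt.intCast_re]
    have hmim : ((m : ℂ)).im = (n₁.im : ℝ) - (n₂.im : ℝ) := by
      rw [hm, toComplex_sub, Complex.sub_im, GaussianInt.intCast_im, GaussianInt.intCast_im]
    have hmabs : 3 * ‖(m : ℂ)‖ ≤ Q := by
      have h1 := Complex.norm_le_abs_re_add_abs_im (m : ℂ)
      rw [hmre, hmim] at h1
      have h2 : ‖(m : ℂ)‖ ≤ 2 * t := by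
        calc ‖(m : ℂ)‖ ≤ |(n₁.re : ℝ) - (n₂.re : ℝ)| + |(n₁.im : ℝ) - (n₂.im : ℝ)| := h1
          _ ≤ 2 * t := by linarith
      rw [ht] at h2; linarith
    have hsp := spacing c γ a q hq hco hc hγ m hm0 hmabs
    have hclose : ∀ x y Δ : ℝ, ⌊((x - round x) + Δ) / δ⌋ = ⌊((y - round y) + Δ) / δ⌋ →
        nint (x - y) < δ := by
      intro x y Δ h
      have h1 := Int.abs_sub_lt_one_of_floor_eq_floor h
      rw [div_sub_div_same, abs_div, abs_of_pos hδ0, div_lt_one hδ0] at h1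
      have h2 : nint (x - y) ≤ |(x - y) - ((round x - round y : ℤ) : ℝ)| :=
        nint_le (x - y) (round x - round y)
      calc nint (x - y) ≤ |(x - y) - ((round x - round y : ℤ) : ℝ)| := h2
        _ = |(x - round x + Δ) - (y - round y + Δ)| := by push_cast; ring_nf
        _ < δ := h1
    have hcre : nint (((n₁ : ℂ) * c).re - ((n₂ : ℂ) * c).re) < δ := hclose _ _ _ he3
    have hcim : nint (((n₁ : ℂ) * c).im - ((n₂ : ℂ) * c).im) < δ := hclose _ _ _ he4
    have hmc : (m : ℂ) * c = (n₁ : ℂ) * c - (n₂ : ℂ) * c := by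
      rw [hm, toComplex_sub]; ring
    rw [hmc, Complex.sub_re, Complex.sub_im] at hsp
    rw [show (1 : ℝ) / (3 * Q) = δ from hδ.symm] at hsp
    rcases max_cases (nint (((n₁ : ℂ) * c).re - ((n₂ : ℂ) * c).re))
        (nint (((n₁ : ℂ) * c).im - ((n₂ : ℂ) * c).im)) with ⟨he, -⟩ | ⟨he, -⟩ <;>
      rw [he] at hsp <;> [linarith [hcre]; linarith [hcim]]
  have hcount : (S.ncard : ℝ) ≤ (T.card : ℝ) := by
    have h := Set.ncard_le_ncard_of_injOn f hmem hinj (Finset.finite_toSet T)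
    rw [Set.ncard_coe_finset] at h
    exact_mod_cast h
  -- cardinality arithmetic
  have heq1 : Real.sqrt z / t = 6 * Real.sqrt z / Q := by
    rw [ht, div_div_eq_mul_div]; ring
  have heq2 : (-Real.sqrt z) / t = -(6 * Real.sqrt z / Q) := by
    rw [ht, div_div_eq_mul_div]; ring
  have hJcard : ((J.card : ℝ)) ≤ 12 * Real.sqrt z / Q + 2 := by
    have hP : (0 : ℝ) ≤ 12 * Real.sqrt z / Q := div_nonneg (by linarith) hQ0.le
    rw [hJ]
    apply card_Icc_le _ _ _ _ (by linarith)
    rw [heq1, heq2]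
    have h1 : (⌊6 * Real.sqrt z / Q⌋ : ℝ) ≤ 6 * Real.sqrt z / Q := Int.floor_le _
    have h2 : -(6 * Real.sqrt z / Q) < (⌊-(6 * Real.sqrt z / Q)⌋ : ℝ) + 1 :=
      Int.lt_floor_add_one _
    have h3 : 12 * Real.sqrt z / Q = 6 * Real.sqrt z / Q + 6 * Real.sqrt z / Q := by ring
    linarith
  have hBcard : ∀ Δ : ℝ, 0 < Δ →
      (((Finset.Icc (0 : ℤ) ⌊2 * Δ / δ⌋).card : ℝ)) ≤ 6 * Δ * Q + 1 := by
    intro Δ hΔ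
    have hP : (0 : ℝ) ≤ 6 * Δ * Q := by nlinarith
    have heq3 : 2 * Δ / δ = 6 * Δ * Q := by
      rw [hδ, div_div_eq_mul_div, div_one]; ring
    apply card_Icc_le _ _ _ _ (by linarith)
    rw [heq3]
    have h1 : (⌊6 * Δ * Q⌋ : ℝ) ≤ 6 * Δ * Q := Int.floor_le _
    push_cast
    linarith
  have hc2 : ((B₂.card : ℝ)) ≤ 6 * Δ₂ * Q + 1 := by rw [hB₂]; exact hBcard Δ₂ hΔ₂
  have hc1 : ((B₁.card : ℝ)) ≤ 6 * Δ₁ * Q + 1 := by rw [hB₁]; exact hBcard Δ₁ hΔ₁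
  have h0J : (0 : ℝ) ≤ (J.card : ℝ) := Nat.cast_nonneg _
  have h0B2 : (0 : ℝ) ≤ (B₂.card : ℝ) := Nat.cast_nonneg _
  have h0B1 : (0 : ℝ) ≤ (B₁.card : ℝ) := Nat.cast_nonneg _
  have hP1 : (0 : ℝ) ≤ 12 * Real.sqrt z / Q + 2 := by
    have := div_nonneg (by linarith : (0:ℝ) ≤ 12 * Real.sqrt z) hQ0.le; linarith
  have hP2 : (0 : ℝ) ≤ 6 * Δ₂ * Q + 1 := by nlinarith
  have hP3 : (0 : ℝ) ≤ 6 * Δ₁ * Q + 1 := by nlinarith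
  have hTcard : (T.card : ℝ) ≤
      (12 * Real.sqrt z / Q + 2) ^ 2 * (6 * Δ₂ * Q + 1) * (6 * Δ₁ * Q + 1) := by
    have hTc : (T.card : ℝ) = (J.card : ℝ) * (J.card : ℝ) * (B₂.card : ℝ) * (B₁.card : ℝ) := by
      rw [hT]
      simp only [Finset.card_product]
      push_cast
      ring
    rw [hTc]
    calc (J.card : ℝ) * (J.card : ℝ) * (B₂.card : ℝ) * (B₁.card : ℝ)
        ≤ ((12 * Real.sqrt z / Q + 2) * (12 * Real.sqrt z / Q + 2) * (6 * Δ₂ * Q + 1)) *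
            (6 * Δ₁ * Q + 1) := by
          apply mul_le_mul _ hc1 h0B1
          · exact mul_nonneg (mul_nonneg hP1 hP1) hP2
          apply mul_le_mul _ hc2 h0B2 (mul_nonneg hP1 hP1)
          exact mul_le_mul hJcard hJcard h0J hP1
      _ = (12 * Real.sqrt z / Q + 2) ^ 2 * (6 * Δ₂ * Q + 1) * (6 * Δ₁ * Q + 1) := by ring
  -- final arithmetic
  have hsq : Real.sqrt z ^ 2 = z := Real.sq_sqrt hz0.le
  have hfin1 : (12 * Real.sqrt z / Q + 2) ^ 2 ≤ 288 * (1 + z / Q ^ 2) := by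
    have h1 : (12 * Real.sqrt z / Q + 2) ^ 2 ≤ 2 * (12 * Real.sqrt z / Q) ^ 2 + 2 * 2 ^ 2 := by
      nlinarith [sq_nonneg (12 * Real.sqrt z / Q - 2)]
    have h2 : (12 * Real.sqrt z / Q) ^ 2 = 144 * (z / Q ^ 2) := by
      rw [div_pow, mul_pow, hsq]; ring
    rw [h2] at h1
    have h3 : (0:ℝ) ≤ z / Q ^ 2 := div_nonneg hz0.le (sq_nonneg Q)
    linarith
  have hpos1 : (0 : ℝ) ≤ 1 + z / Q ^ 2 := by
    have := div_nonneg hz0.le (sq_nonneg Q); linarith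
  have hpos2 : (0 : ℝ) ≤ 1 + Δ₂ * Q := by nlinarith
  have hpos3 : (0 : ℝ) ≤ 1 + Δ₁ * Q := by nlinarith
  have hfin2 : 6 * Δ₂ * Q + 1 ≤ 6 * (1 + Δ₂ * Q) := by linarith
  have hfin3 : 6 * Δ₁ * Q + 1 ≤ 6 * (1 + Δ₁ * Q) := by linarith
  calc (S.ncard : ℝ) ≤ (T.card : ℝ) := hcount
    _ ≤ (12 * Real.sqrt z / Q + 2) ^ 2 * (6 * Δ₂ * Q + 1) * (6 * Δ₁ * Q + 1) := hTcard
    _ ≤ (288 * (1 + z / Q ^ 2)) * (6 * (1 + Δ₂ * Q)) * (6 * (1 + Δ₁ * Q)) := by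
        apply mul_le_mul _ hfin3 hP3
        · exact mul_nonneg (by linarith : (0:ℝ) ≤ 288 * (1 + z / Q ^ 2)) (by linarith)
        apply mul_le_mul _ hfin2 hP2 (by nlinarith)
        exact hfin1
      _ = 10368 * (1 + z / Q ^ 2) * (1 + Δ₁ * Q) * (1 + Δ₂ * Q) := by ring
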